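/- arXiv:2001.01444 — 2 statements merged into one kernel-verified Lean document; each statement's English description precedes it below -/
import Mathlib

section
/- Let f be a C¹ function and suppose the tangent planes to the graph of f along an arc of the conic t ↦ (x + v sin t + u(1-cos t), y - u sin t + v(1-cos t), z + a sin t + b(1-cos t)), t ∈ (-ε,ε), all pass through the common point (x+u, y+v, z₀), where the conic is contained in the graph, z = f(x,y), a = f_x(x,y)v - f_y(x,y)u, and (u,v) ≠ (0,0). Then (f_xx - f_yy) u v + f_xy (v² - u²) = 0 at (x,y) (assuming f is C²). -/
open Real Set

noncomputable def pdx (f : ℝ → ℝ → ℝ) : ℝ → ℝ → ℝ := fun x y => deriv (fun s => f s y) x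
noncomputable def pdy (f : ℝ → ℝ → ℝ) : ℝ → ℝ → ℝ := fun x y => deriv (fun s => f x s) y

/-- if the conic lies on the graph of `f` and the tangent planes along
the conic arc all pass through the common point `(x+u, y+v, z₀)`, then
`(f_xx - f_yy) uv + f_xy (v² - u²) = 0` at `(x,y)`. -/
theorem stmt_18 (f : ℝ → ℝ → ℝ) (x y z a b u v z₀ ε : ℝ) (hε : 0 < ε)
    (hf : ContDiffAt ℝ 2 (fun p : ℝ × ℝ => f p.1 p.2) (x, y))
    (huv : (u, v) ≠ ((0 : ℝ), (0 : ℝ)))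
    (hz : z = f x y)
    (ha : a = pdx f x y * v - pdy f x y * u)
    (hgraph : ∀ t ∈ Ioo (-ε) ε,
      z + a * Real.sin t + b * (1 - Real.cos t)
        = f (x + v * Real.sin t + u * (1 - Real.cos t))
            (y - u * Real.sin t + v * (1 - Real.cos t)))
    (htang : ∀ t ∈ Ioo (-ε) ε,
      z₀ - f (x + v * Real.sin t + u * (1 - Real.cos t))
            (y - u * Real.sin t + v * (1 - Real.cos t))
        = pdx f (x + v * Real.sin t + u * (1 - Real.cos t))
              (y - u * Real.sin t + v * (1 - Real.cos t))
            * ((x + u) - (x + v * Real.sin t + u * (1 - Real.cos t)))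
          + pdy f (x + v * Real.sin t + u * (1 - Real.cos t))
              (y - u * Real.sin t + v * (1 - Real.cos t))
            * ((y + v) - (y - u * Real.sin t + v * (1 - Real.cos t)))) :
    (pdx (pdx f) x y - pdy (pdy f) x y) * u * v
      + pdy (pdx f) x y * (v ^ 2 - u ^ 2) = 0 := by
  set F : ℝ × ℝ → ℝ := fun p : ℝ × ℝ => f p.1 p.2 with hFdef
  -- F is differentiable near (x, y)
  have hFd : ∀ᶠ p in nhds (x, y), DifferentiableAt ℝ F p := by
    filter_upwards [hf.eventually (by norm_num)] with p hp
    exact hp.differentiableAt (by norm_num)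
  -- partial derivatives via fderiv
  have hpdxD : ∀ p : ℝ × ℝ, DifferentiableAt ℝ F p →
      HasDerivAt (fun s => f s p.2) (fderiv ℝ F p (1, 0)) p.1 := by
    intro p hp
    have hcurve : HasDerivAt (fun s : ℝ => (s, p.2)) ((1 : ℝ), (0 : ℝ)) p.1 :=
      (hasDerivAt_id p.1).prodMk (hasDerivAt_const p.1 p.2)
    exact hp.hasFDerivAt.comp_hasDerivAt p.1 hcurve
  have hpdyD : ∀ p : ℝ × ℝ, DifferentiableAt ℝ F p →
      HasDerivAt (fun s => f p.1 s) (fderiv ℝ F p (0, 1)) p.2 := by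
    intro p hp
    have hcurve : HasDerivAt (fun s : ℝ => (p.1, s)) ((0 : ℝ), (1 : ℝ)) p.2 :=
      (hasDerivAt_const p.2 p.1).prodMk (hasDerivAt_id p.2)
    exact hp.hasFDerivAt.comp_hasDerivAt p.2 hcurve
  have hpdx_eq : ∀ p : ℝ × ℝ, DifferentiableAt ℝ F p →
      pdx f p.1 p.2 = fderiv ℝ F p (1, 0) := fun p hp => (hpdxD p hp).deriv
  have hpdy_eq : ∀ p : ℝ × ℝ, DifferentiableAt ℝ F p →
      pdy f p.1 p.2 = fderiv ℝ F p (0, 1) := fun p hp => (hpdyD p hp).deriv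
  -- second derivative
  have hf1 : ContDiffAt ℝ 1 (fderiv ℝ F) (x, y) := hf.fderiv_right (by norm_num)
  set f'' := fderiv ℝ (fderiv ℝ F) (x, y) with hf''def
  have hf''h : HasFDerivAt (fderiv ℝ F) f'' (x, y) :=
    (hf1.differentiableAt (by norm_num)).hasFDerivAt
  have hsymm : f'' (1, 0) (0, 1) = f'' (0, 1) (1, 0) :=
    second_derivative_symmetric_of_eventually
      (hFd.mono fun p hp => hp.hasFDerivAt) hf''h (1, 0) (0, 1)
  -- pure second partial derivatives
  have tendx : Filter.Tendsto (fun s : ℝ => (s, y)) (nhds x) (nhds (x, y)) :=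
    (continuous_id.prodMk continuous_const).tendsto x
  have tendy : Filter.Tendsto (fun s : ℝ => (x, s)) (nhds y) (nhds (x, y)) :=
    (continuous_const.prodMk continuous_id).tendsto y
  have keyx : ∀ w : ℝ × ℝ, HasDerivAt (fun s => fderiv ℝ F (s, y) w) (f'' (1, 0) w) x := by
    intro w
    have hcurve : HasDerivAt (fun s : ℝ => (s, y)) ((1 : ℝ), (0 : ℝ)) x :=
      (hasDerivAt_id x).prodMk (hasDerivAt_const x y)
    have h1 : HasDerivAt (fun s => fderiv ℝ F (s, y)) (f'' (1, 0)) x :=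
      hf''h.comp_hasDerivAt x hcurve
    simpa using h1.clm_apply (hasDerivAt_const x w)
  have keyy : ∀ w : ℝ × ℝ, HasDerivAt (fun s => fderiv ℝ F (x, s) w) (f'' (0, 1) w) y := by
    intro w
    have hcurve : HasDerivAt (fun s : ℝ => (x, s)) ((0 : ℝ), (1 : ℝ)) y :=
      (hasDerivAt_const y x).prodMk (hasDerivAt_id y)
    have h1 : HasDerivAt (fun s => fderiv ℝ F (x, s)) (f'' (0, 1)) y :=
      hf''h.comp_hasDerivAt y hcurve
    simpa using h1.clm_apply (hasDerivAt_const y w)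
  have hxx : pdx (pdx f) x y = f'' (1, 0) (1, 0) := by
    have heq : (fun s => pdx f s y) =ᶠ[nhds x] fun s => fderiv ℝ F (s, y) (1, 0) := by
      filter_upwards [tendx.eventually hFd] with s hs
      exact hpdx_eq (s, y) hs
    show deriv (fun s => pdx f s y) x = _
    rw [heq.deriv_eq]
    exact (keyx (1, 0)).deriv
  have hyx : pdy (pdx f) x y = f'' (0, 1) (1, 0) := by
    have heq : (fun s => pdx f x s) =ᶠ[nhds y] fun s => fderiv ℝ F (x, s) (1, 0) := by
      filter_upwards [tendy.eventually hFd] with s hs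
      exact hpdx_eq (x, s) hs
    show deriv (fun s => pdx f x s) y = _
    rw [heq.deriv_eq]
    exact (keyy (1, 0)).deriv
  have hyy : pdy (pdy f) x y = f'' (0, 1) (0, 1) := by
    have heq : (fun s => pdy f x s) =ᶠ[nhds y] fun s => fderiv ℝ F (x, s) (0, 1) := by
      filter_upwards [tendy.eventually hFd] with s hs
      exact hpdy_eq (x, s) hs
    show deriv (fun s => pdy f x s) y = _
    rw [heq.deriv_eq]
    exact (keyy (0, 1)).deriv
  -- the curve
  set X : ℝ → ℝ := fun t => x + v * Real.sin t + u * (1 - Real.cos t) with hXdef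
  set Y : ℝ → ℝ := fun t => y - u * Real.sin t + v * (1 - Real.cos t) with hYdef
  have hX0 : X 0 = x := by simp [hXdef]
  have hY0 : Y 0 = y := by simp [hYdef]
  have hX' : HasDerivAt X v 0 := by
    rw [hXdef]
    have h := ((hasDerivAt_const (0 : ℝ) x).add ((Real.hasDerivAt_sin 0).const_mul v)).add
      (((Real.hasDerivAt_cos 0).const_sub 1).const_mul u)
    exact h.congr_deriv (by simp)
  have hY' : HasDerivAt Y (-u) 0 := by
    rw [hYdef]
    have h := ((hasDerivAt_const (0 : ℝ) y).sub ((Real.hasDerivAt_sin 0).const_mul u)).add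
      (((Real.hasDerivAt_cos 0).const_sub 1).const_mul v)
    exact h.congr_deriv (by simp)
  have hγ : HasDerivAt (fun t => (X t, Y t)) ((v, -u) : ℝ × ℝ) 0 := hX'.prodMk hY'
  have hγ0 : ((X 0, Y 0) : ℝ × ℝ) = (x, y) := by rw [hX0, hY0]
  have tendγ : Filter.Tendsto (fun t => ((X t, Y t) : ℝ × ℝ)) (nhds 0) (nhds (x, y)) := by
    rw [← hγ0]; exact hγ.continuousAt
  -- the constant function along the curve
  have hGconst : (fun t => fderiv ℝ F (X t, Y t) ((x + u) - X t, (y + v) - Y t)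
      + F (X t, Y t)) =ᶠ[nhds 0] fun _ => z₀ := by
    have hmem : Ioo (-ε) ε ∈ nhds (0 : ℝ) := Ioo_mem_nhds (by linarith) hε
    filter_upwards [hmem, tendγ.eventually hFd] with t ht hdt
    have h2 := htang t ht
    have e1 := hpdx_eq (X t, Y t) hdt
    have e2 := hpdy_eq (X t, Y t) hdt
    have hlin : fderiv ℝ F (X t, Y t) ((x + u) - X t, (y + v) - Y t)
        = fderiv ℝ F (X t, Y t) (1, 0) * ((x + u) - X t)
          + fderiv ℝ F (X t, Y t) (0, 1) * ((y + v) - Y t) := by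
      have hv : (((x + u) - X t, (y + v) - Y t) : ℝ × ℝ)
          = ((x + u) - X t) • ((1 : ℝ), (0 : ℝ)) + ((y + v) - Y t) • ((0 : ℝ), (1 : ℝ)) := by
        simp [Prod.ext_iff]
      rw [hv, map_add, map_smul, map_smul]
      simp [mul_comm]
    rw [hlin, ← e1, ← e2]
    have hXt : x + v * Real.sin t + u * (1 - Real.cos t) = X t := by rw [hXdef]
    have hYt : y - u * Real.sin t + v * (1 - Real.cos t) = Y t := by rw [hYdef]
    rw [hXt, hYt] at h2
    have hFt : F (X t, Y t) = f (X t) (Y t) := rfl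
    rw [hFt]
    linarith [h2]
  -- derivative of the constant function
  have hG0 : HasDerivAt (fun t => fderiv ℝ F (X t, Y t) ((x + u) - X t, (y + v) - Y t)
      + F (X t, Y t)) 0 0 :=
    (hasDerivAt_const (0 : ℝ) z₀).congr_of_eventuallyEq hGconst
  -- derivative computed via chain rule
  have hFdiff : DifferentiableAt ℝ F (x, y) := hFd.self_of_nhds
  have hG1 : HasDerivAt (fun t => fderiv ℝ F (X t, Y t)) (f'' (v, -u)) 0 :=
    hf''h.comp_hasDerivAt_of_eq 0 hγ hγ0.symm
  have hw : HasDerivAt (fun t => (((x + u) - X t, (y + v) - Y t) : ℝ × ℝ)) ((-v, u) : ℝ × ℝ) 0 := by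
    have h1 : HasDerivAt (fun t => (x + u) - X t) (-v) 0 := hX'.const_sub (x + u)
    have h2 : HasDerivAt (fun t => (y + v) - Y t) (-(-u)) 0 := hY'.const_sub (y + v)
    simpa using h1.prodMk h2
  have hG2 : HasDerivAt (fun t => F (X t, Y t)) (fderiv ℝ F (x, y) (v, -u)) 0 :=
    hFdiff.hasFDerivAt.comp_hasDerivAt_of_eq 0 hγ hγ0.symm
  have hD : HasDerivAt (fun t => fderiv ℝ F (X t, Y t) ((x + u) - X t, (y + v) - Y t)
      + F (X t, Y t))
      (f'' (v, -u) ((x + u) - X 0, (y + v) - Y 0) + fderiv ℝ F (X 0, Y 0) (-v, u)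
        + fderiv ℝ F (x, y) (v, -u)) 0 :=
    (hG1.clm_apply hw).add hG2
  have hzero : f'' (v, -u) ((x + u) - X 0, (y + v) - Y 0) + fderiv ℝ F (X 0, Y 0) (-v, u)
      + fderiv ℝ F (x, y) (v, -u) = 0 := hD.unique hG0
  rw [hγ0, hX0, hY0] at hzero
  have hcancel : fderiv ℝ F (x, y) ((-v, u) : ℝ × ℝ) + fderiv ℝ F (x, y) ((v, -u) : ℝ × ℝ) = 0 := by
    rw [← map_add]
    norm_num
    exact (fderiv ℝ F (x, y)).map_zero
  have hmain : f'' (v, -u) ((x + u) - x, (y + v) - y) = 0 := by linarith [hzero, hcancel]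
  have hsimp : ((x + u) - x, (y + v) - y) = ((u, v) : ℝ × ℝ) := by simp
  rw [hsimp] at hmain
  -- expand bilinearly
  have hexp : f'' ((v, -u) : ℝ × ℝ) ((u, v) : ℝ × ℝ)
      = v * (u * f'' (1, 0) (1, 0) + v * f'' (1, 0) (0, 1))
        - u * (u * f'' (0, 1) (1, 0) + v * f'' (0, 1) (0, 1)) := by
    have h1 : ((v, -u) : ℝ × ℝ) = v • ((1 : ℝ), (0 : ℝ)) + (-u) • ((0 : ℝ), (1 : ℝ)) := by
      simp [Prod.ext_iff]
    have h2 : ((u, v) : ℝ × ℝ) = u • ((1 : ℝ), (0 : ℝ)) + v • ((0 : ℝ), (1 : ℝ)) := by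
      simp [Prod.ext_iff]
    rw [h1, h2]
    simp only [map_add, map_smul, map_neg, ContinuousLinearMap.add_apply,
      ContinuousLinearMap.smul_apply, ContinuousLinearMap.neg_apply, smul_eq_mul]
    ring
  rw [hxx, hyx, hyy]
  linear_combination hmain - hexp - v ^ 2 * hsymm
end

section
/- For the function f(x,y) = y²/(x²+y²) defined on ℝ² \ {(0,0)}, and for each point (x,y) ≠ (0,0), the curve t ↦ (x(t), y(t), z(t)) with x(t) = x + v sin t + u(1-cos t), y(t) = y - u sin t + v(1-cos t), z(t) = z + a sin t + b(1-cos t), where u = -x/2, v = -y/2, z = y²/(x²+y²), a = xy/(x²+y²), b = (x²-y²)/(2(x²+y²)), is contained in the graph of f for all t such that (x(t), y(t)) ≠ (0,0), i.e., z(t) = f(x(t), y(t)). -/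
open Real

/-- for `f(x,y) = y²/(x²+y²)`, the explicit conics with
`u = -x/2`, `v = -y/2`, `z = y²/(x²+y²)`, `a = xy/(x²+y²)`, `b = (x²-y²)/(2(x²+y²))`
are contained in the graph of `f` wherever defined. -/
theorem stmt_19 (x y t : ℝ) (hxy : (x, y) ≠ ((0 : ℝ), (0 : ℝ))) :
    ∀ X Y Z : ℝ,
      X = x + (-y / 2) * Real.sin t + (-x / 2) * (1 - Real.cos t) →
      Y = y - (-x / 2) * Real.sin t + (-y / 2) * (1 - Real.cos t) →
      Z = y ^ 2 / (x ^ 2 + y ^ 2) + (x * y / (x ^ 2 + y ^ 2)) * Real.sin t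
          + ((x ^ 2 - y ^ 2) / (2 * (x ^ 2 + y ^ 2))) * (1 - Real.cos t) →
      (X, Y) ≠ ((0 : ℝ), (0 : ℝ)) →
      Z = Y ^ 2 / (X ^ 2 + Y ^ 2) := by
  intro X Y Z hX hY hZ hXY
  have hxy' : x ^ 2 + y ^ 2 ≠ 0 := by
    intro h
    apply hxy
    have hx : x = 0 := by nlinarith [sq_nonneg x, sq_nonneg y]
    have hy : y = 0 := by nlinarith [sq_nonneg x, sq_nonneg y]
    simp [hx, hy]
  have hXY' : X ^ 2 + Y ^ 2 ≠ 0 := by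
    intro h
    apply hXY
    have hx : X = 0 := by nlinarith [sq_nonneg X, sq_nonneg Y]
    have hy : Y = 0 := by nlinarith [sq_nonneg X, sq_nonneg Y]
    simp [hx, hy]
  have hsc := Real.sin_sq_add_cos_sq t
  subst hX hY hZ
  rw [eq_div_iff hXY']
  field_simp
  linear_combination ((x ^ 2 + y ^ 2) * (2 * y ^ 2 + 2 * x * y * Real.sin t + (x ^ 2 - y ^ 2) * (1 - Real.cos t) - 2 * x ^ 2)) * hsc
end
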